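/- Let C, D be two XOR-clauses with intersection I = C ∩ D, |I| ≥ 2, |C| > |I|, |D| > |I|, and var(C) ∩ var(D) = var(I). Let s be a fresh variable, I' = I ∪ {s} (constraint: ⊕I ⊕ s = 0), C' = (C \ I) ∪ {s}, D' = (D \ I) ∪ {s}. Then the XOR-clause-set {I', C', D'} represents {C, D}: the projections of its solutions to var(C) ∪ var(D) are exactly the common solutions of C and D. -/

import Mathlib

namespace Stmt15

/-- The value in `ℤ/2` of the left-hand side `⊕_{x ∈ C} x` of the XOR-clause `C`
under the total assignment `a`. -/
def parity (a : ℕ → Bool) (C : Finset (ℕ × Bool)) : ZMod 2 :=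
  ∑ l ∈ C, (if a l.1 = l.2 then 1 else 0)

lemma parity_congr {a b : ℕ → Bool} {E : Finset (ℕ × Bool)}
    (h : ∀ l ∈ E, a l.1 = b l.1) : parity a E = parity b E :=
  Finset.sum_congr rfl (fun l hl => by rw [h l hl])

lemma parity_union_s (b : ℕ → Bool) (E : Finset (ℕ × Bool)) (s : ℕ)
    (hs : s ∉ E.image Prod.fst) :
    parity b (E ∪ {(s, true)}) = parity b E + (if b s = true then 1 else 0) := by
  have hd : Disjoint E {(s, true)} := by
    simp only [Finset.disjoint_singleton_right]
    intro h
    exact hs (Finset.mem_image_of_mem Prod.fst h)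
  rw [parity, Finset.sum_union hd, Finset.sum_singleton]
  rfl

lemma parity_split (a : ℕ → Bool) (C D : Finset (ℕ × Bool)) :
    parity a (C ∩ D) + parity a (C \ D) = parity a C :=
  Finset.sum_inter_add_sum_sdiff C D _

lemma zmod2_cases (x : ZMod 2) : x = 0 ∨ x = 1 := by revert x; decide

/-- The `X₂` splitting of two XOR-clauses sharing the part `I = C ∩ D` via a fresh
variable `s` represents `{C, D}`: the restrictions to the original variables of the
solutions of `{I ∪ {s}, (C \ I) ∪ {s}, (D \ I) ∪ {s}}` are exactly the common solutions
of `C` and `D`. -/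
theorem x2_represents (C D : Finset (ℕ × Bool))
    (hCcf : ∀ v : ℕ, ¬((v, true) ∈ C ∧ (v, false) ∈ C))
    (hDcf : ∀ v : ℕ, ¬((v, true) ∈ D ∧ (v, false) ∈ D))
    (hI2 : 2 ≤ (C ∩ D).card)
    (hCI : (C ∩ D).card < C.card) (hDI : (C ∩ D).card < D.card)
    (hvars : (C.image Prod.fst) ∩ (D.image Prod.fst) = (C ∩ D).image Prod.fst)
    (s : ℕ) (hs : s ∉ C.image Prod.fst ∪ D.image Prod.fst) :
    ∀ a : ℕ → Bool,
      (parity a C = 0 ∧ parity a D = 0) ↔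
        ∃ b : ℕ → Bool, (∀ v : ℕ, v ≠ s → b v = a v) ∧
          parity b ((C ∩ D) ∪ {(s, true)}) = 0 ∧
          parity b ((C \ D) ∪ {(s, true)}) = 0 ∧
          parity b ((D \ C) ∪ {(s, true)}) = 0 := by
  have hsC : s ∉ C.image Prod.fst := fun h => hs (Finset.mem_union_left _ h)
  have hsD : s ∉ D.image Prod.fst := fun h => hs (Finset.mem_union_right _ h)
  have hsub : ∀ {E F : Finset (ℕ × Bool)}, E ⊆ F → s ∉ F.image Prod.fst →
      s ∉ E.image Prod.fst := fun hEF hF h =>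
    hF (Finset.image_subset_image hEF h)
  have hsI : s ∉ (C ∩ D).image Prod.fst := hsub Finset.inter_subset_left hsC
  have hsCD : s ∉ (C \ D).image Prod.fst := hsub (Finset.sdiff_subset) hsC
  have hsDC : s ∉ (D \ C).image Prod.fst := hsub (Finset.sdiff_subset) hsD
  have hnev : ∀ {E : Finset (ℕ × Bool)}, s ∉ E.image Prod.fst →
      ∀ l ∈ E, l.1 ≠ s := by
    intro E hE l hl h
    exact hE (h ▸ Finset.mem_image_of_mem Prod.fst hl)
  intro a
  constructor
  · rintro ⟨hC, hD⟩
    set b : ℕ → Bool := fun v =>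
      if v = s then (if parity a (C ∩ D) = 1 then true else false) else a v with hb
    have hbe : ∀ v : ℕ, v ≠ s → b v = a v := by
      intro v hv; simp [hb, hv]
    have hpar : ∀ {E : Finset (ℕ × Bool)}, s ∉ E.image Prod.fst →
        parity b E = parity a E := by
      intro E hE
      exact parity_congr (fun l hl => hbe l.1 (hnev hE l hl))
    have hbs : (if b s = true then (1 : ZMod 2) else 0) = parity a (C ∩ D) := by
      rcases zmod2_cases (parity a (C ∩ D)) with h | h <;> simp [hb, h]
    refine ⟨b, hbe, ?_, ?_, ?_⟩
    · rw [parity_union_s b _ s hsI, hpar hsI, hbs]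
      rcases zmod2_cases (parity a (C ∩ D)) with h | h <;> rw [h] <;> decide
    · rw [parity_union_s b _ s hsCD, hpar hsCD, hbs]
      have h1 := parity_split a C D
      rw [hC] at h1
      rcases zmod2_cases (parity a (C ∩ D)) with h | h <;>
        rcases zmod2_cases (parity a (C \ D)) with h' | h' <;>
        rw [h, h'] at h1 ⊢ <;> first | rfl | simp at h1 ⊢ <;> exact absurd h1 (by decide)
    · rw [parity_union_s b _ s hsDC, hpar hsDC, hbs]
      have h1 := parity_split a D C
      rw [hD, Finset.inter_comm] at h1
      rcases zmod2_cases (parity a (C ∩ D)) with h | h <;>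
        rcases zmod2_cases (parity a (D \ C)) with h' | h' <;>
        rw [h, h'] at h1 ⊢ <;> first | rfl | simp at h1 ⊢ <;> exact absurd h1 (by decide)
  · rintro ⟨b, hbe, h1, h2, h3⟩
    have hpar : ∀ {E : Finset (ℕ × Bool)}, s ∉ E.image Prod.fst →
        parity b E = parity a E := by
      intro E hE
      exact parity_congr (fun l hl => hbe l.1 (hnev hE l hl))
    rw [parity_union_s b _ s hsI, hpar hsI] at h1
    rw [parity_union_s b _ s hsCD, hpar hsCD] at h2
    rw [parity_union_s b _ s hsDC, hpar hsDC] at h3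
    constructor
    · rw [← parity_split a C D]
      set t : ZMod 2 := (if b s = true then 1 else 0) with ht
      rcases zmod2_cases t with h | h <;>
        rcases zmod2_cases (parity a (C ∩ D)) with hi | hi <;>
        rcases zmod2_cases (parity a (C \ D)) with hc | hc <;>
        rw [h, hi] at h1 <;> rw [h, hc] at h2 <;>
        rw [hi, hc] <;> first | rfl | (exfalso; revert h1 h2; decide)
    · rw [← parity_split a D C, Finset.inter_comm]
      set t : ZMod 2 := (if b s = true then 1 else 0) with ht
      rcases zmod2_cases t with h | h <;>
        rcases zmod2_cases (parity a (C ∩ D)) with hi | hi <;>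
        rcases zmod2_cases (parity a (D \ C)) with hc | hc <;>
        rw [h, hi] at h1 <;> rw [h, hc] at h3 <;>
        rw [hi, hc] <;> first | rfl | (exfalso; revert h1 h3; decide)

end Stmt15
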